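/- Let G be a directed graph, s a source, t a vertex, and suppose G is transformed into H by: subdividing every edge (x,y) into a path (x, ℓ_{x,y}, r_{x,y}, y), and replacing each vertex y ∉ {s,t} having in-neighbours x_1,…,x_p and out-neighbours z_1,…,z_q by p binary trees, where the tree for x_i has root r_{x_i,y} and leaves ℓ_{y,z_1},…,ℓ_{y,z_q}. Then maxflow(s,t,G) = maxflow(s,t,H), and in H every vertex other than s has out-degree at most 2. -/

import Mathlib

open Finset

/-- `p` is a nonempty directed path/walk (as a list of edges) from `s` to `t`
using only edges of `G`. -/
def IsPath {V : Type*} (G : Finset (V × V)) (s t : V) (p : List (V × V)) : Prop :=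
  p ≠ [] ∧ (∀ e ∈ p, e ∈ G) ∧ List.Chain' (fun e f => e.2 = f.1) p ∧
    p.head?.map Prod.fst = some s ∧ p.getLast?.map Prod.snd = some t

/-- `G` contains `r` pairwise edge-disjoint paths from `s` to `t` (unit capacities). -/
def EDP {V : Type*} (G : Finset (V × V)) (s t : V) (r : ℕ) : Prop :=
  ∃ ps : Fin r → List (V × V), (∀ i, IsPath G s t (ps i)) ∧
    ∀ i j, i ≠ j → ∀ e, e ∈ ps i → e ∉ ps j

/-- Max-flow with unit capacities: the maximum number of edge-disjoint `s`-`t` paths. -/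
noncomputable def maxFlow {V : Type*} (G : Finset (V × V)) (s t : V) : ℕ :=
  sSup {r | EDP G s t r}

/-- Directed reachability in the edge set `G`. -/
def Reach {V : Type*} (G : Finset (V × V)) (s t : V) : Prop :=
  Relation.ReflTransGen (fun a b => (a, b) ∈ G) s t

def inEdges {V : Type*} [DecidableEq V] (G : Finset (V × V)) (v : V) : Finset (V × V) :=
  G.filter fun e => e.2 = v

def outDeg {V : Type*} [DecidableEq V] (G : Finset (V × V)) (v : V) : ℕ :=
  (G.filter fun e => e.1 = v).card

/-- `H` is a `(lam, k)` fault-tolerant bounded-flow-preserver of `G` w.r.t. source `s`: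
for every set `F` of at most `k` failed edges and every vertex `t`, the `s`-`t` max-flow
of `H \ F` equals that of `G \ F` whenever the latter is at most `lam`, and is at least
`lam` otherwise. -/
def IsFTBFP {V : Type*} [DecidableEq V] (G H : Finset (V × V)) (s : V) (lam k : ℕ) : Prop :=
  H ⊆ G ∧ ∀ F : Finset (V × V), F.card ≤ k → ∀ t : V,
    (maxFlow (G \ F) s t ≤ lam → maxFlow (H \ F) s t = maxFlow (G \ F) s t) ∧
    (lam < maxFlow (G \ F) s t → lam ≤ maxFlow (H \ F) s t)

/-- `H` is a `j`-fault-tolerant reachability subgraph of `G` w.r.t. source `s`. -/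
def IsFTRS {V : Type*} [DecidableEq V] (G H : Finset (V × V)) (s : V) (j : ℕ) : Prop :=
  H ⊆ G ∧ ∀ F : Finset (V × V), F.card ≤ j → ∀ t : V,
    (Reach (H \ F) s t ↔ Reach (G \ F) s t)

def IsCut {V : Type*} (A : Finset V) (s t : V) : Prop := s ∈ A ∧ t ∉ A

/-- Number of edges of `G` from `A` to its complement. -/
def cutVal {V : Type*} [DecidableEq V] (G : Finset (V × V)) (A : Finset V) : ℕ :=
  (G.filter fun e => e.1 ∈ A ∧ e.2 ∉ A).card

def IsMinCut {V : Type*} [DecidableEq V] (G : Finset (V × V)) (s t : V) (A : Finset V) : Prop :=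
  IsCut A s t ∧ ∀ B : Finset V, IsCut B s t → cutVal G A ≤ cutVal G B

def IsCutS {V : Type*} (S : Finset V) (t : V) (A : Finset V) : Prop := S ⊆ A ∧ t ∉ A

def IsMinCutS {V : Type*} [DecidableEq V] (G : Finset (V × V)) (S : Finset V) (t : V)
    (A : Finset V) : Prop :=
  IsCutS S t A ∧ ∀ B : Finset V, IsCutS S t B → cutVal G A ≤ cutVal G B

/-- Farthest min-cut: the min-cut whose source side contains the source side of
every min-cut. -/
def IsFMC {V : Type*} [DecidableEq V] (G : Finset (V × V)) (S : Finset V) (t : V)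
    (A : Finset V) : Prop :=
  IsMinCutS G S t A ∧ ∀ B : Finset V, IsMinCutS G S t B → B ⊆ A

/-- Vertices outside `A` with an in-edge from `A`. -/
def outSet {V : Type*} [DecidableEq V] (G : Finset (V × V)) (A : Finset V) : Finset V :=
  (G.filter fun e => e.1 ∈ A ∧ e.2 ∉ A).image Prod.snd

open scoped Classical

/-- Vertices of the out-degree-reducing transformation of a graph on `V`:
original vertices, the subdivision vertices `ℓ_{x,y}` (`false`) and `r_{x,y}`
(`true`) of each edge `(x,y)`, and the spine nodes `(x, y, z)` of the binary tree
(a caterpillar, ordered by the linear order on `V`) replacing vertex `y` for its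
in-neighbour `x`, one spine node per out-neighbour `z` of `y`. -/
abbrev TW (V : Type*) := V ⊕ ((V × V) × Bool) ⊕ (V × V × V)

/-- Edges of the transformed graph: `s → ℓ_{s,y}`; `ℓ_{x,y} → r_{x,y}`;
`r_{x,y} → y` when `y ∈ {s,t}`; for `y ∉ {s,t}`, `r_{x,y}` enters the spine of the
binary tree `B_{x,y}` at the smallest out-neighbour of `y`, each spine node
`(x,y,z)` has an edge to the leaf `ℓ_{y,z}` and to the next spine node. -/
def transEdge {V : Type*} [LinearOrder V] (G : Finset (V × V)) (s t : V) :
    TW V × TW V → Prop := fun e =>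
  match e with
  | (Sum.inl a, Sum.inr (Sum.inl ((x, y), false))) =>
      a = s ∧ x = s ∧ (s, y) ∈ G
  | (Sum.inr (Sum.inl ((x, y), false)), Sum.inr (Sum.inl ((x2, y2), true))) =>
      x = x2 ∧ y = y2 ∧ (x, y) ∈ G
  | (Sum.inr (Sum.inl ((x, y), true)), Sum.inl b) =>
      b = y ∧ (y = s ∨ y = t) ∧ (x, y) ∈ G
  | (Sum.inr (Sum.inl ((x, y), true)), Sum.inr (Sum.inr (x2, y2, z))) =>
      x = x2 ∧ y = y2 ∧ y ≠ s ∧ y ≠ t ∧ (x, y) ∈ G ∧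
        (y, z) ∈ G ∧ ∀ z2, (y, z2) ∈ G → z ≤ z2
  | (Sum.inr (Sum.inr (x, y, z)), Sum.inr (Sum.inl ((y2, z2), false))) =>
      y = y2 ∧ z = z2 ∧ y ≠ s ∧ y ≠ t ∧ (x, y) ∈ G ∧ (y, z) ∈ G
  | (Sum.inr (Sum.inr (x, y, z)), Sum.inr (Sum.inr (x2, y2, z2))) =>
      x = x2 ∧ y = y2 ∧ y ≠ s ∧ y ≠ t ∧ (x, y) ∈ G ∧
        (y, z) ∈ G ∧ (y, z2) ∈ G ∧ z < z2 ∧ ∀ w, (y, w) ∈ G → z < w → z2 ≤ w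
  | _ => False

noncomputable def transGraph {V : Type*} [Fintype V] [LinearOrder V]
    (G : Finset (V × V)) (s t : V) : Finset (TW V × TW V) :=
  Finset.univ.filter (transEdge G s t)



theorem List.chain'_singleton {α : Type*} {R : α → α → Prop} (a : α) :
    List.Chain' R [a] := List.isChain_singleton a

theorem List.chain'_nil {α : Type*} {R : α → α → Prop} : List.Chain' R [] := List.IsChain.nil

theorem List.chain'_cons {α : Type*} {R : α → α → Prop} {x y : α} {l : List α} :
    List.Chain' R (x :: y :: l) ↔ R x y ∧ List.Chain' R (y :: l) := List.isChain_cons_cons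

theorem List.chain'_cons' {α : Type*} {R : α → α → Prop} {x : α} {l : List α} :
    List.Chain' R (x :: l) ↔ (∀ y ∈ l.head?, R x y) ∧ List.Chain' R l := List.isChain_cons

theorem List.chain'_append {α : Type*} {R : α → α → Prop} {l₁ l₂ : List α} :
    List.Chain' R (l₁ ++ l₂) ↔ List.Chain' R l₁ ∧ List.Chain' R l₂ ∧
      ∀ x ∈ l₁.getLast?, ∀ y ∈ l₂.head?, R x y := List.isChain_append

namespace Stmt12

variable {V : Type*} [Fintype V] [LinearOrder V]

def eL (x y : V) : TW V := Sum.inr (Sum.inl ((x, y), false))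
def eR (x y : V) : TW V := Sum.inr (Sum.inl ((x, y), true))
def sp (x y z : V) : TW V := Sum.inr (Sum.inr (x, y, z))

lemma mem_trans {G : Finset (V × V)} {s t : V} {e : TW V × TW V} :
    e ∈ transGraph G s t ↔ transEdge G s t e := by
  simp [transGraph]

def proj : TW V × TW V → Option (V × V)
  | (Sum.inl _, Sum.inr (Sum.inl ((x, y), _))) => some (x, y)
  | (Sum.inr (Sum.inl ((x, y), _)), _) => some (x, y)
  | (Sum.inr (Sum.inr (x, y, _)), _) => some (x, y)
  | _ => none

/-- spine walk from `eR x y` to `sp x y z` -/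
lemma spineWalk (G : Finset (V × V)) (s t : V) (x y : V) (hxy : (x, y) ∈ G)
    (hys : y ≠ s) (hyt : y ≠ t) :
    ∀ n z, (y, z) ∈ G → (G.filter (fun e => e.1 = y ∧ e.2 < z)).card ≤ n →
    ∃ w : List (TW V × TW V), w ≠ [] ∧
      (∀ e ∈ w, e ∈ transGraph G s t ∧ proj e = some (x, y)) ∧
      w.Chain' (fun e f => e.2 = f.1) ∧
      w.head?.map Prod.fst = some (eR x y) ∧
      w.getLast?.map Prod.snd = some (sp x y z) := by
  have base : ∀ z, (y, z) ∈ G → (∀ z2, (y, z2) ∈ G → z ≤ z2) →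
      ∃ w : List (TW V × TW V), w ≠ [] ∧
      (∀ e ∈ w, e ∈ transGraph G s t ∧ proj e = some (x, y)) ∧
      w.Chain' (fun e f => e.2 = f.1) ∧
      w.head?.map Prod.fst = some (eR x y) ∧
      w.getLast?.map Prod.snd = some (sp x y z) := by
    intro z hz hmin
    refine ⟨[(eR x y, sp x y z)], by simp, ?_, List.chain'_singleton _, by simp, by simp⟩
    intro e he
    simp only [List.mem_singleton] at he
    subst he
    refine ⟨?_, rfl⟩
    rw [mem_trans]
    exact ⟨rfl, rfl, hys, hyt, hxy, hz, hmin⟩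
  intro n
  induction n with
  | zero =>
    intro z hz hcard
    refine base z hz ?_
    intro z2 h2
    by_contra hlt
    have : (y, z2) ∈ G.filter (fun e => e.1 = y ∧ e.2 < z) := by
      simp [Finset.mem_filter, h2, not_le.mp hlt]
    have h0 : (G.filter (fun e => e.1 = y ∧ e.2 < z)).card = 0 := Nat.le_zero.mp hcard
    rw [Finset.card_eq_zero] at h0
    rw [h0] at this
    exact absurd this (Finset.notMem_empty _)
  | succ n ih =>
    intro z hz hcard
    by_cases hempty : G.filter (fun e => e.1 = y ∧ e.2 < z) = ∅
    · refine base z hz ?_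
      intro z2 h2
      by_contra hlt
      have : (y, z2) ∈ G.filter (fun e => e.1 = y ∧ e.2 < z) := by
        simp [Finset.mem_filter, h2, not_le.mp hlt]
      rw [hempty] at this
      exact absurd this (Finset.notMem_empty _)
    · have hne := Finset.nonempty_iff_ne_empty.mpr hempty
      set S := (G.filter (fun e => e.1 = y ∧ e.2 < z)).image Prod.snd with hS
      have hSne : S.Nonempty := hne.image _
      set z' := S.max' hSne with hz'def
      have hz'S : z' ∈ S := S.max'_mem hSne
      obtain ⟨e1, he1, he1z⟩ := Finset.mem_image.mp hz'S
      have he1G := (Finset.mem_filter.mp he1).1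
      have he1y : e1.1 = y := (Finset.mem_filter.mp he1).2.1
      have he1lt : e1.2 < z := (Finset.mem_filter.mp he1).2.2
      have he1eq : e1 = (y, z') := Prod.ext he1y he1z
      have hz'lt : z' < z := he1z ▸ he1lt
      have hz'G : (y, z') ∈ G := he1eq ▸ he1G
      have hsucc : ∀ w, (y, w) ∈ G → z' < w → z ≤ w := by
        intro w hw hlt
        by_contra hwz
        have hwS : w ∈ S := by
          rw [hS]
          exact Finset.mem_image.mpr ⟨(y, w), Finset.mem_filter.mpr ⟨hw, rfl, not_le.mp hwz⟩, rfl⟩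
        exact absurd (S.le_max' w hwS) (not_le.mpr hlt)
      have hcard' : (G.filter (fun e => e.1 = y ∧ e.2 < z')).card ≤ n := by
        have hss : G.filter (fun e => e.1 = y ∧ e.2 < z') ⊂ G.filter (fun e => e.1 = y ∧ e.2 < z) := by
          refine ⟨fun e he => ?_, ?_⟩
          · rw [Finset.mem_filter] at he ⊢
            exact ⟨he.1, he.2.1, he.2.2.trans hz'lt⟩
          · intro hsub
            have : (y, z') ∈ G.filter (fun e => e.1 = y ∧ e.2 < z) := by
              simp [Finset.mem_filter, hz'G, hz'lt]
            have := hsub this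
            simp [Finset.mem_filter] at this
          
        have := Finset.card_lt_card hss
        omega
      obtain ⟨w, hwne, hwmem, hwch, hwh, hwl⟩ := ih z' hz'G hcard'
      refine ⟨w ++ [(sp x y z', sp x y z)], by simp, ?_, ?_, ?_, by simp⟩
      · intro e he
        rw [List.mem_append, List.mem_singleton] at he
        rcases he with he | he
        · exact hwmem e he
        · subst he
          refine ⟨?_, rfl⟩
          rw [mem_trans]
          exact ⟨rfl, rfl, hys, hyt, hxy, hz'G, hz, hz'lt, hsucc⟩
      · rw [List.chain'_append]
        refine ⟨hwch, List.chain'_singleton _, ?_⟩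
        intro a ha b hb
        simp only [List.head?_cons, Option.mem_def, Option.some.injEq] at hb
        subst hb
        rw [Option.mem_def] at ha
        rw [ha] at hwl
        simp only [Option.map_some, Option.some.injEq] at hwl
        exact hwl
      · obtain ⟨a, w', rfl⟩ := List.exists_cons_of_ne_nil hwne
        simpa using hwh

lemma connector (G : Finset (V × V)) (s t : V) (x y z : V) (hxy : (x, y) ∈ G)
    (hyz : (y, z) ∈ G) (hyt : y ≠ t) :
    ∃ c : List (TW V × TW V), c ≠ [] ∧
      (∀ e ∈ c, e ∈ transGraph G s t ∧ ∃ g, proj e = some g ∧ (g = (x, y) ∨ g = (y, z))) ∧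
      c.Chain' (fun e f => e.2 = f.1) ∧
      c.head?.map Prod.fst = some (eR x y) ∧
      c.getLast?.map Prod.snd = some (eL y z) := by
  by_cases hys : y = s
  · subst hys
    refine ⟨[(eR x y, Sum.inl y), (Sum.inl y, eL y z)], by simp, ?_, ?_, by rfl, by rfl⟩
    · intro e he
      simp only [List.mem_cons, List.not_mem_nil, or_false] at he
      rcases he with he | he <;> subst he
      · exact ⟨mem_trans.mpr ⟨rfl, Or.inl rfl, hxy⟩, (x, y), rfl, Or.inl rfl⟩
      · exact ⟨mem_trans.mpr ⟨rfl, rfl, hyz⟩, (y, z), rfl, Or.inr rfl⟩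
    · exact List.chain'_cons.mpr ⟨rfl, List.chain'_singleton _⟩
  · obtain ⟨w, hwne, hwmem, hwch, hwh, hwl⟩ := spineWalk G s t x y hxy hys hyt _ z hyz le_rfl
    refine ⟨w ++ [(sp x y z, eL y z)], by simp, ?_, ?_, ?_, ?_⟩
    · intro e he
      rw [List.mem_append, List.mem_singleton] at he
      rcases he with he | he
      · exact ⟨(hwmem e he).1, (x, y), (hwmem e he).2, Or.inl rfl⟩
      · subst he
        exact ⟨mem_trans.mpr ⟨rfl, rfl, hys, hyt, hxy, hyz⟩, (x, y), rfl, Or.inl rfl⟩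
    · rw [List.chain'_append]
      refine ⟨hwch, List.chain'_singleton _, ?_⟩
      intro a ha b hb
      simp only [List.head?_cons, Option.mem_def, Option.some.injEq] at hb
      subst hb
      rw [Option.mem_def] at ha
      rw [ha] at hwl
      simpa using hwl
    · obtain ⟨a, w', rfl⟩ := List.exists_cons_of_ne_nil hwne
      simpa using hwh
    · rw [List.getLast?_append_of_ne_nil _ (by simp)]
      rfl

/-- expansion of a G-path into an H-path -/
lemma expand (G : Finset (V × V)) (s t : V) :
    ∀ p : List (V × V), p ≠ [] → (∀ e ∈ p, e ∈ G) →
    p.Chain' (fun e f => e.2 = f.1) →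
    (∀ e ∈ p.dropLast, e.2 ≠ t) →
    p.getLast?.map Prod.snd = some t →
    ∀ x y, p.head? = some (x, y) →
    ∃ q : List (TW V × TW V), q ≠ [] ∧
      (∀ e ∈ q, e ∈ transGraph G s t ∧ ∃ g, proj e = some g ∧ g ∈ p) ∧
      q.Chain' (fun e f => e.2 = f.1) ∧
      q.head?.map Prod.fst = some (eL x y) ∧
      q.getLast?.map Prod.snd = some (Sum.inl t : TW V) := by
  intro p
  induction p with
  | nil => intro h; exact absurd rfl h
  | cons hd tl ih =>
    intro _ hG hch hdrop hlast x y hhead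
    simp only [List.head?_cons, Option.some.injEq] at hhead
    subst hhead
    cases tl with
    | nil =>
      have hyt : y = t := by simpa using hlast
      subst hyt
      have hxyG : (x, y) ∈ G := hG _ (by simp)
      refine ⟨[(eL x y, eR x y), (eR x y, Sum.inl y)], by simp, ?_, ?_, by rfl, by rfl⟩
      · intro e he
        simp only [List.mem_cons, List.not_mem_nil, or_false] at he
        rcases he with he | he <;> subst he
        · exact ⟨mem_trans.mpr ⟨rfl, rfl, hxyG⟩, (x, y), rfl, by simp⟩
        · exact ⟨mem_trans.mpr ⟨rfl, Or.inr rfl, hxyG⟩, (x, y), rfl, by simp⟩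
      · exact List.chain'_cons.mpr ⟨rfl, List.chain'_singleton _⟩
    | cons hd2 tl2 =>
      obtain ⟨y2, z⟩ := hd2
      have hy2 : y = y2 := (List.chain'_cons.mp hch).1
      subst hy2
      have hynt : y ≠ t := by
        have : (x, y) ∈ ((x, y) :: (y, z) :: tl2).dropLast := by
          rw [List.dropLast_cons₂]
          exact List.mem_cons_self
        exact hdrop _ this
      have hxyG : (x, y) ∈ G := hG _ (by simp)
      have hyzG : (y, z) ∈ G := hG _ (by simp [List.mem_cons])
      have hlast' : ((y, z) :: tl2).getLast?.map Prod.snd = some t := by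
        rwa [List.getLast?_cons_cons] at hlast
      have hdrop' : ∀ e ∈ ((y, z) :: tl2).dropLast, e.2 ≠ t := by
        intro e he
        refine hdrop e ?_
        rw [List.dropLast_cons₂]
        exact List.mem_cons_of_mem _ he
      obtain ⟨q', hq'ne, hq'mem, hq'ch, hq'h, hq'l⟩ :=
        ih (by simp) (fun e he => hG e (List.mem_cons_of_mem _ he))
          (List.chain'_cons.mp hch).2 hdrop' hlast' y z rfl
      obtain ⟨c, hcne, hcmem, hcch, hch2, hcl⟩ := connector G s t x y z hxyG hyzG hynt
      refine ⟨(eL x y, eR x y) :: (c ++ q'), by simp, ?_, ?_, by rfl, ?_⟩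
      · intro e he
        simp only [List.mem_cons, List.mem_append] at he
        rcases he with he | he | he
        · subst he
          exact ⟨mem_trans.mpr ⟨rfl, rfl, hxyG⟩, (x, y), rfl, by simp⟩
        · obtain ⟨hH, g, hg, hgor⟩ := hcmem e he
          refine ⟨hH, g, hg, ?_⟩
          rcases hgor with h | h <;> subst h <;> simp
        · obtain ⟨hH, g, hg, hgp⟩ := hq'mem e he
          exact ⟨hH, g, hg, List.mem_cons_of_mem _ hgp⟩
      · rw [List.chain'_cons']
        constructor
        · intro h hh
          obtain ⟨a, c', rfl⟩ := List.exists_cons_of_ne_nil hcne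
          simp only [List.cons_append, List.head?_cons, Option.mem_def, Option.some.injEq] at hh
          subst hh
          have : a.1 = eR x y := by simpa using hch2
          exact this.symm
        · rw [List.chain'_append]
          refine ⟨hcch, hq'ch, ?_⟩
          intro a ha b hb
          rw [Option.mem_def] at ha hb
          rw [ha] at hcl
          simp only [Option.map_some, Option.some.injEq] at hcl
          obtain ⟨b1, q'', rfl⟩ := List.exists_cons_of_ne_nil hq'ne
          simp only [List.head?_cons, Option.some.injEq] at hb
          subst hb
          have hb1 : b1.1 = eL y z := by simpa using hq'h
          exact hcl.trans hb1.symm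
      · rw [← List.cons_append, List.getLast?_append_of_ne_nil _ hq'ne]
        exact hq'l

/-- truncation at the first visit of t -/
lemma truncate (G : Finset (V × V)) (t : V) :
    ∀ p : List (V × V), (∀ e ∈ p, e ∈ G) → p.Chain' (fun e f => e.2 = f.1) →
    (∃ e ∈ p, e.2 = t) →
    ∀ x y, p.head? = some (x, y) →
    ∃ p' : List (V × V), p' ≠ [] ∧ (∀ e ∈ p', e ∈ p) ∧
      p'.Chain' (fun e f => e.2 = f.1) ∧ p'.head? = some (x, y) ∧
      p'.getLast?.map Prod.snd = some t ∧ ∀ e ∈ p'.dropLast, e.2 ≠ t := by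
  intro p
  induction p with
  | nil => intro _ _ hex; simp at hex
  | cons hd tl ih =>
    intro hG hch hex x y hhead
    simp only [List.head?_cons, Option.some.injEq] at hhead
    subst hhead
    by_cases hyt : y = t
    · exact ⟨[(x, y)], by simp, by simp, List.chain'_singleton _, by rfl, by simp [hyt], by simp⟩
    · have hex' : ∃ e ∈ tl, e.2 = t := by
        rcases hex with ⟨e, he, het⟩
        rcases List.mem_cons.mp he with rfl | he'
        · exact absurd het hyt
        · exact ⟨e, he', het⟩
      have htl_ne : tl ≠ [] := by
        rintro rfl
        obtain ⟨e0, he0, _⟩ := hex'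
        simp at he0
      obtain ⟨⟨y2, z⟩, tl', rfl⟩ := List.exists_cons_of_ne_nil htl_ne
      have hy2 : y = y2 := (List.chain'_cons.mp hch).1
      subst hy2
      obtain ⟨p', hp'ne, hp'sub, hp'ch, hp'h, hp'l, hp'drop⟩ :=
        ih (fun e he => hG e (List.mem_cons_of_mem _ he)) (List.chain'_cons.mp hch).2
          hex' y z rfl
      obtain ⟨a, p'', rfl⟩ := List.exists_cons_of_ne_nil hp'ne
      have ha : a = (y, z) := by simpa using hp'h
      subst ha
      refine ⟨(x, y) :: (y, z) :: p'', by simp, ?_, ?_, by rfl, ?_, ?_⟩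
      · intro e he
        rcases List.mem_cons.mp he with rfl | he'
        · simp
        · exact List.mem_cons_of_mem _ (hp'sub e he')
      · exact List.chain'_cons.mpr ⟨rfl, hp'ch⟩
      · rwa [List.getLast?_cons_cons]
      · intro e he
        rw [List.dropLast_cons₂] at he
        rcases List.mem_cons.mp he with rfl | he'
        · exact hyt
        · exact hp'drop e he'

lemma forward_path (G : Finset (V × V)) (s t : V) (p : List (V × V))
    (hp : IsPath G s t p) :
    ∃ q, IsPath (transGraph G s t) (Sum.inl s) (Sum.inl t) q ∧
      ∀ e ∈ q, ∃ g, proj e = some g ∧ g ∈ p := by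
  obtain ⟨hne, hG, hch, hh, hl⟩ := hp
  obtain ⟨⟨x0, y0⟩, p0, rfl⟩ := List.exists_cons_of_ne_nil hne
  have hx0 : s = x0 := by
    have : x0 = s := by simpa using hh
    exact this.symm
  subst hx0
  have hex : ∃ e ∈ (s, y0) :: p0, e.2 = t := by
    obtain ⟨e, hesome⟩ := Option.map_eq_some_iff.mp hl
    obtain ⟨hne2, rfl⟩ := List.mem_getLast?_eq_getLast (Option.mem_def.mpr hesome.1)
    exact ⟨_, List.getLast_mem hne2, hesome.2⟩
  obtain ⟨p', hp'ne, hp'sub, hp'ch, hp'h, hp'l, hp'drop⟩ :=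
    truncate G t _ hG hch hex s y0 rfl
  have hp'G : ∀ e ∈ p', e ∈ G := fun e he => hG e (hp'sub e he)
  obtain ⟨q, hqne, hqmem, hqch, hqh, hql⟩ :=
    expand G s t p' hp'ne hp'G hp'ch hp'drop hp'l s y0 hp'h
  have hsy0 : (s, y0) ∈ G := hG _ (List.mem_cons_self)
  refine ⟨(Sum.inl s, eL s y0) :: q, ⟨by simp, ?_, ?_, by rfl, ?_⟩, ?_⟩
  · intro e he
    rcases List.mem_cons.mp he with rfl | he'
    · exact mem_trans.mpr ⟨rfl, rfl, hsy0⟩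
    · exact (hqmem e he').1
  · rw [List.chain'_cons']
    refine ⟨?_, hqch⟩
    intro h hh
    obtain ⟨a, q', rfl⟩ := List.exists_cons_of_ne_nil hqne
    simp only [List.head?_cons, Option.mem_def, Option.some.injEq] at hh
    subst hh
    have ha1 : a.1 = eL s y0 := by simpa using hqh
    exact ha1.symm
  · obtain ⟨a, q', rfl⟩ := List.exists_cons_of_ne_nil hqne
    rwa [List.getLast?_cons_cons]
  · intro e he
    rcases List.mem_cons.mp he with rfl | he'
    · exact ⟨(s, y0), rfl, List.mem_cons_self⟩
    · obtain ⟨_, g, hg, hgp⟩ := hqmem e he'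
      exact ⟨g, hg, hp'sub g hgp⟩

def contract : List (TW V × TW V) → List (V × V) :=
  List.filterMap fun e =>
    match e with
    | (Sum.inr (Sum.inl ((x, y), false)), _) => some (x, y)
    | _ => none

def tgt : TW V → V
  | Sum.inl a => a
  | Sum.inr (Sum.inl ((x, _), false)) => x
  | Sum.inr (Sum.inl ((_, y), true)) => y
  | Sum.inr (Sum.inr (_, y, _)) => y

def GWalk (G : Finset (V × V)) (a t : V) (p : List (V × V)) : Prop :=
  (∀ e ∈ p, e ∈ G) ∧ p.Chain' (fun e f => e.2 = f.1) ∧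
    ((p = [] ∧ a = t) ∨ (p.head?.map Prod.fst = some a ∧ p.getLast?.map Prod.snd = some t))

lemma gwalk_head {G : Finset (V × V)} {a t : V} {l : List (V × V)}
    (h : GWalk G a t l) : ∀ e ∈ l.head?, e.1 = a := by
  intro e he
  rcases h.2.2 with ⟨rfl, _⟩ | ⟨hh, _⟩
  · simp at he
  · rw [Option.mem_def] at he
    rw [he] at hh
    simpa using hh

lemma gwalk_cons {G : Finset (V × V)} {x y t : V} {l : List (V × V)}
    (hG : (x, y) ∈ G) (h : GWalk G y t l) : GWalk G x t ((x, y) :: l) := by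
  refine ⟨?_, ?_, Or.inr ⟨by rfl, ?_⟩⟩
  · intro g hg
    rcases List.mem_cons.mp hg with rfl | hg'
    · exact hG
    · exact h.1 g hg'
  · rw [List.chain'_cons']
    exact ⟨fun e he => (gwalk_head h e he).symm, h.2.1⟩
  · rcases h.2.2 with ⟨rfl, rfl⟩ | ⟨_, hl⟩
    · simp
    · have hlne : l ≠ [] := by rintro rfl; simp at hl
      obtain ⟨b, l', rfl⟩ := List.exists_cons_of_ne_nil hlne
      rwa [List.getLast?_cons_cons]

lemma backward_key (G : Finset (V × V)) (s t : V) (hst : s ≠ t) :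
    ∀ q : List (TW V × TW V), q ≠ [] → (∀ e ∈ q, e ∈ transGraph G s t) →
    q.Chain' (fun e f => e.2 = f.1) →
    q.getLast?.map Prod.snd = some (Sum.inl t : TW V) →
    ∀ u : TW V, q.head?.map Prod.fst = some u →
    GWalk G (tgt u) t (contract q) ∧
      ((∃ a, u = Sum.inl a) → contract q ≠ []) ∧
      ((∃ x y, u = eL x y) → contract q ≠ []) := by
  intro q
  induction q with
  | nil => intro h; exact absurd rfl h
  | cons e rest ih =>
    intro _ hH hch hlast u hu
    obtain ⟨u', v⟩ := e
    simp only [List.head?_cons, Option.map_some, Option.some.injEq] at hu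
    subst hu
    have hev : transEdge G s t (u', v) := mem_trans.mp (hH _ (List.mem_cons_self))
    rcases u' with a | (⟨⟨x, y⟩, b⟩ | ⟨x, y, z⟩)
    · -- u' = inl a
      rcases v with a2 | (⟨⟨x2, y2⟩, b2⟩ | ⟨x2, y2, z2⟩)
      · simp [transEdge] at hev
      · cases b2
        · have ha : a = s := hev.1
          have hx2 : x2 = s := hev.2.1
          have hrne : rest ≠ [] := by rintro rfl; simp at hlast
          obtain ⟨e2, rest', rfl⟩ := List.exists_cons_of_ne_nil hrne
          have hv : e2.1 = eL x2 y2 := ((List.chain'_cons.mp hch).1).symm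
          have hlast' : (e2 :: rest').getLast?.map Prod.snd = some (Sum.inl t : TW V) := by
            rwa [List.getLast?_cons_cons] at hlast
          obtain ⟨hw, _, hcl2⟩ := ih (by simp)
            (fun e he => hH e (List.mem_cons_of_mem _ he))
            (List.chain'_cons.mp hch).2 hlast' (eL x2 y2) (by simp [hv])
          rw [ha]
          rw [hx2] at hw
          exact ⟨hw, fun _ => hcl2 ⟨x2, y2, rfl⟩, fun _ => hcl2 ⟨x2, y2, rfl⟩⟩
        · simp [transEdge] at hev
      · simp [transEdge] at hev
    · -- u' = ℓ or r
      cases b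
      · -- u' = eL x y
        rcases v with a2 | (⟨⟨x2, y2⟩, b2⟩ | ⟨x2, y2, z2⟩)
        · simp [transEdge] at hev
        · cases b2
          · simp [transEdge] at hev
          · obtain ⟨rfl, rfl, hGxy⟩ : x = x2 ∧ y = y2 ∧ (x, y) ∈ G := hev
            have hrne : rest ≠ [] := by rintro rfl; simp at hlast
            obtain ⟨e2, rest', rfl⟩ := List.exists_cons_of_ne_nil hrne
            have hv : e2.1 = eR x y := ((List.chain'_cons.mp hch).1).symm
            have hlast' : (e2 :: rest').getLast?.map Prod.snd = some (Sum.inl t : TW V) := by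
              rwa [List.getLast?_cons_cons] at hlast
            obtain ⟨hw, _, _⟩ := ih (by simp)
              (fun e he => hH e (List.mem_cons_of_mem _ he))
              (List.chain'_cons.mp hch).2 hlast' (eR x y) (by simp [hv])
            refine ⟨gwalk_cons hGxy hw, fun _ => ?_, fun _ => ?_⟩ <;>
              exact List.cons_ne_nil _ _
        · simp [transEdge] at hev
      · -- u' = eR x y
        rcases v with a2 | (⟨⟨x2, y2⟩, b2⟩ | ⟨x2, y2, z2⟩)
        · have ha2 : a2 = y := hev.1
          have hGxy : (x, y) ∈ G := hev.2.2
          cases rest with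
          | nil =>
            have hyt : y = t := by
              have hat : a2 = t := by simpa using hlast
              exact ha2.symm.trans hat
            refine ⟨⟨?_, ?_, Or.inl ⟨rfl, hyt⟩⟩, ?_, ?_⟩
            · rintro g hg; exact absurd hg List.not_mem_nil
            · exact List.chain'_nil
            · rintro ⟨a, h⟩; simp [eR] at h
            · rintro ⟨x', y', h⟩; simp [eR, eL] at h
          | cons e2 rest' =>
            have hv : e2.1 = (Sum.inl y : TW V) := by
              have h0 : e2.1 = (Sum.inl a2 : TW V) := ((List.chain'_cons.mp hch).1).symm
              rw [ha2] at h0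
              exact h0
            have hlast' : (e2 :: rest').getLast?.map Prod.snd = some (Sum.inl t : TW V) := by
              rwa [List.getLast?_cons_cons] at hlast
            obtain ⟨hw, _, _⟩ := ih (by simp)
              (fun e he => hH e (List.mem_cons_of_mem _ he))
              (List.chain'_cons.mp hch).2 hlast' (Sum.inl y) (by simp [hv])
            refine ⟨hw, ?_, ?_⟩
            · rintro ⟨a, h⟩; simp [eR] at h
            · rintro ⟨x', y', h⟩; simp [eR, eL] at h
        · cases b2 <;> simp [transEdge] at hev
        · obtain ⟨rfl, rfl, hys, hyt, hGxy, hGyz, hmin⟩ :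
              x = x2 ∧ y = y2 ∧ y ≠ s ∧ y ≠ t ∧ (x, y) ∈ G ∧ (y, z2) ∈ G ∧
                ∀ w, (y, w) ∈ G → z2 ≤ w := hev
          have hrne : rest ≠ [] := by rintro rfl; simp at hlast
          obtain ⟨e2, rest', rfl⟩ := List.exists_cons_of_ne_nil hrne
          have hv : e2.1 = sp x y z2 := ((List.chain'_cons.mp hch).1).symm
          have hlast' : (e2 :: rest').getLast?.map Prod.snd = some (Sum.inl t : TW V) := by
            rwa [List.getLast?_cons_cons] at hlast
          obtain ⟨hw, _, _⟩ := ih (by simp)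
            (fun e he => hH e (List.mem_cons_of_mem _ he))
            (List.chain'_cons.mp hch).2 hlast' (sp x y z2) (by simp [hv])
          refine ⟨hw, ?_, ?_⟩
          · rintro ⟨a, h⟩; simp [eR] at h
          · rintro ⟨x', y', h⟩; simp [eR, eL] at h
    · -- u' = sp x y z
      rcases v with a2 | (⟨⟨x2, y2⟩, b2⟩ | ⟨x2, y2, z2⟩)
      · simp [transEdge] at hev
      · cases b2
        · obtain ⟨rfl, rfl, hys, hyt, hGxy, hGyz⟩ :
              y = x2 ∧ z = y2 ∧ y ≠ s ∧ y ≠ t ∧ (x, y) ∈ G ∧ (y, z) ∈ G := hev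
          have hrne : rest ≠ [] := by rintro rfl; simp at hlast
          obtain ⟨e2, rest', rfl⟩ := List.exists_cons_of_ne_nil hrne
          have hv : e2.1 = eL y z := ((List.chain'_cons.mp hch).1).symm
          have hlast' : (e2 :: rest').getLast?.map Prod.snd = some (Sum.inl t : TW V) := by
            rwa [List.getLast?_cons_cons] at hlast
          obtain ⟨hw, _, _⟩ := ih (by simp)
            (fun e he => hH e (List.mem_cons_of_mem _ he))
            (List.chain'_cons.mp hch).2 hlast' (eL y z) (by simp [hv])
          refine ⟨hw, ?_, ?_⟩
          · rintro ⟨a, h⟩; simp [sp] at h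
          · rintro ⟨x', y', h⟩; simp [sp, eL] at h
        · simp [transEdge] at hev
      · obtain ⟨rfl, rfl, hys, hyt, hGxy, hGyz, hGyz2, hlt, hmin⟩ :
            x = x2 ∧ y = y2 ∧ y ≠ s ∧ y ≠ t ∧ (x, y) ∈ G ∧ (y, z) ∈ G ∧ (y, z2) ∈ G ∧
              z < z2 ∧ ∀ w, (y, w) ∈ G → z < w → z2 ≤ w := hev
        have hrne : rest ≠ [] := by rintro rfl; simp at hlast
        obtain ⟨e2, rest', rfl⟩ := List.exists_cons_of_ne_nil hrne
        have hv : e2.1 = sp x y z2 := ((List.chain'_cons.mp hch).1).symm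
        have hlast' : (e2 :: rest').getLast?.map Prod.snd = some (Sum.inl t : TW V) := by
          rwa [List.getLast?_cons_cons] at hlast
        obtain ⟨hw, _, _⟩ := ih (by simp)
          (fun e he => hH e (List.mem_cons_of_mem _ he))
          (List.chain'_cons.mp hch).2 hlast' (sp x y z2) (by simp [hv])
        refine ⟨hw, ?_, ?_⟩
        · rintro ⟨a, h⟩; simp [sp] at h
        · rintro ⟨x', y', h⟩; simp [sp, eL] at h

lemma backward_path (G : Finset (V × V)) (s t : V) (hst : s ≠ t)
    (q : List (TW V × TW V)) (hq : IsPath (transGraph G s t) (Sum.inl s) (Sum.inl t) q) :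
    IsPath G s t (contract q) := by
  obtain ⟨hne, hH, hch, hh, hl⟩ := hq
  obtain ⟨hw, hcl1, _⟩ := backward_key G s t hst q hne hH hch hl (Sum.inl s) hh
  have hne2 : contract q ≠ [] := hcl1 ⟨s, rfl⟩
  rcases hw.2.2 with ⟨h0, _⟩ | ⟨h1, h2⟩
  · exact absurd h0 hne2
  · exact ⟨hne2, hw.1, hw.2.1, h1, h2⟩

lemma contract_mem (G : Finset (V × V)) (s t : V) {q : List (TW V × TW V)}
    (hq : ∀ e ∈ q, e ∈ transGraph G s t) {x y : V} (h : (x, y) ∈ contract q) :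
    (eL x y, eR x y) ∈ q := by
  obtain ⟨e, he, hfe⟩ := List.mem_filterMap.mp h
  obtain ⟨u, v⟩ := e
  rcases u with a | (⟨⟨x', y'⟩, b⟩ | ⟨x', y', z'⟩)
  · simp at hfe
  · cases b
    · have hxy : x' = x ∧ y' = y := by
        simpa using hfe
      obtain ⟨rfl, rfl⟩ := hxy
      have hev : transEdge G s t (eL x' y', v) := mem_trans.mp (hq _ he)
      rcases v with a2 | (⟨⟨x2, y2⟩, b2⟩ | ⟨x2, y2, z2⟩)
      · simp [transEdge, eL] at hev
      · cases b2
        · simp [transEdge, eL] at hev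
        · obtain ⟨rfl, rfl, -⟩ : x' = x2 ∧ y' = y2 ∧ (x', y') ∈ G := hev
          exact he
      · simp [transEdge, eL] at hev
    · simp at hfe
  · simp at hfe

lemma edp_iff (G : Finset (V × V)) (s t : V) (hst : s ≠ t) (r : ℕ) :
    EDP G s t r ↔ EDP (transGraph G s t) (Sum.inl s) (Sum.inl t) r := by
  constructor
  · rintro ⟨ps, hps, hdisj⟩
    choose qs hqs hproj using fun i => forward_path G s t (ps i) (hps i)
    refine ⟨qs, hqs, ?_⟩
    intro i j hij e hei hej
    obtain ⟨g, hg, hgi⟩ := hproj i e hei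
    obtain ⟨g', hg', hgj⟩ := hproj j e hej
    rw [hg] at hg'
    obtain rfl : g = g' := by simpa using hg'
    exact hdisj i j hij g hgi hgj
  · rintro ⟨qs, hqs, hdisj⟩
    refine ⟨fun i => contract (qs i), fun i => backward_path G s t hst _ (hqs i), ?_⟩
    intro i j hij e hei hej
    obtain ⟨x, y⟩ := e
    have h1 := contract_mem G s t (hqs i).2.1 hei
    have h2 := contract_mem G s t (hqs j).2.1 hej
    exact hdisj i j hij _ h1 h2

lemma outdeg_le (G : Finset (V × V)) (s t : V) (w : TW V) (hw : w ≠ Sum.inl s) :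
    outDeg (transGraph G s t) w ≤ 2 := by
  unfold outDeg
  have hcard : ((transGraph G s t).filter (fun e => e.1 = w)).card ≤
      (Finset.univ : Finset Bool).card := by
    refine Finset.card_le_card_of_injOn
      (fun e => match e.2 with
        | Sum.inr (Sum.inr _) => true
        | _ => false)
      (fun _ _ => Finset.mem_univ _) ?_
    intro e1 he1 e2 he2 hcls
    rw [Finset.mem_coe, Finset.mem_filter] at he1 he2
    obtain ⟨hH1, hw1⟩ := he1
    obtain ⟨hH2, hw2⟩ := he2
    obtain ⟨u1, v1⟩ := e1
    obtain ⟨u2, v2⟩ := e2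
    simp only at hw1 hw2 hcls
    rcases w with a | (⟨⟨x, y⟩, b⟩ | ⟨x, y, z⟩)
    · -- no out-edges from inl a (a ≠ s)
      subst hw1
      have hev1 : transEdge G s t (Sum.inl a, v1) := mem_trans.mp hH1
      rcases v1 with a2 | (⟨⟨p1, q1⟩, b1⟩ | ⟨p1, q1, r1⟩)
      · simp [transEdge] at hev1
      · cases b1
        · exact absurd (congrArg Sum.inl hev1.1) hw
        · simp [transEdge] at hev1
      · simp [transEdge] at hev1
    · cases b
      · -- w = eL x y
        subst hw1; subst hw2
        have hev1 : transEdge G s t (Sum.inr (Sum.inl ((x, y), false)), v1) :=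
          mem_trans.mp hH1
        have hev2 : transEdge G s t (Sum.inr (Sum.inl ((x, y), false)), v2) :=
          mem_trans.mp hH2
        rcases v1 with a2 | (⟨⟨p1, q1⟩, b1⟩ | ⟨p1, q1, r1⟩)
        · simp [transEdge] at hev1
        · cases b1
          · simp [transEdge] at hev1
          · rcases v2 with a3 | (⟨⟨p2, q2⟩, b2⟩ | ⟨p2, q2, r2⟩)
            · simp [transEdge] at hev2
            · cases b2
              · simp [transEdge] at hev2
              · obtain ⟨rfl, rfl, -⟩ : x = p1 ∧ y = q1 ∧ (x, y) ∈ G := hev1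
                obtain ⟨rfl, rfl, -⟩ : x = p2 ∧ y = q2 ∧ (x, y) ∈ G := hev2
                rfl
            · simp [transEdge] at hev2
        · simp [transEdge] at hev1
      · -- w = eR x y
        subst hw1; subst hw2
        have hev1 : transEdge G s t (Sum.inr (Sum.inl ((x, y), true)), v1) :=
          mem_trans.mp hH1
        have hev2 : transEdge G s t (Sum.inr (Sum.inl ((x, y), true)), v2) :=
          mem_trans.mp hH2
        rcases v1 with a2 | (⟨⟨p1, q1⟩, b1⟩ | ⟨p1, q1, r1⟩)
        · rcases v2 with a3 | (⟨⟨p2, q2⟩, b2⟩ | ⟨p2, q2, r2⟩)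
          · have h1 : a2 = y := hev1.1
            have h2 : a3 = y := hev2.1
            rw [h1, h2]
          · cases b2 <;> simp [transEdge] at hev2
          · simp at hcls
        · cases b1 <;> simp [transEdge] at hev1
        · rcases v2 with a3 | (⟨⟨p2, q2⟩, b2⟩ | ⟨p2, q2, r2⟩)
          · simp at hcls
          · cases b2 <;> simp [transEdge] at hev2
          · obtain ⟨rfl, rfl, -, -, -, hG1, hm1⟩ :
                x = p1 ∧ y = q1 ∧ y ≠ s ∧ y ≠ t ∧ (x, y) ∈ G ∧ (y, r1) ∈ G ∧
                  ∀ z2, (y, z2) ∈ G → r1 ≤ z2 := hev1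
            obtain ⟨heq1, heq2, -, -, -, hG2, hm2⟩ :
                x = p2 ∧ y = q2 ∧ y ≠ s ∧ y ≠ t ∧ (x, y) ∈ G ∧ (y, r2) ∈ G ∧
                  ∀ z2, (y, z2) ∈ G → r2 ≤ z2 := hev2
            have hr : r1 = r2 := le_antisymm (hm1 r2 hG2) (hm2 r1 hG1)
            rw [← heq1, ← heq2, hr]
    · -- w = sp x y z
      subst hw1; subst hw2
      have hev1 : transEdge G s t (Sum.inr (Sum.inr (x, y, z)), v1) :=
        mem_trans.mp hH1
      have hev2 : transEdge G s t (Sum.inr (Sum.inr (x, y, z)), v2) :=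
        mem_trans.mp hH2
      rcases v1 with a2 | (⟨⟨p1, q1⟩, b1⟩ | ⟨p1, q1, r1⟩)
      · simp [transEdge] at hev1
      · cases b1
        · rcases v2 with a3 | (⟨⟨p2, q2⟩, b2⟩ | ⟨p2, q2, r2⟩)
          · simp [transEdge] at hev2
          · cases b2
            · obtain ⟨rfl, rfl, -⟩ := hev1
              obtain ⟨heq1, heq2, -⟩ := hev2
              rw [← heq1, ← heq2]
            · simp [transEdge] at hev2
          · simp at hcls
        · simp [transEdge] at hev1
      · rcases v2 with a3 | (⟨⟨p2, q2⟩, b2⟩ | ⟨p2, q2, r2⟩)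
        · simp [transEdge] at hev2
        · cases b2
          · simp at hcls
          · simp [transEdge] at hev2
        · obtain ⟨rfl, rfl, -, -, -, hGz1, hG1, hlt1, hm1⟩ :
              x = p1 ∧ y = q1 ∧ y ≠ s ∧ y ≠ t ∧ (x, y) ∈ G ∧ (y, z) ∈ G ∧ (y, r1) ∈ G ∧
                z < r1 ∧ ∀ w', (y, w') ∈ G → z < w' → r1 ≤ w' := hev1
          obtain ⟨heq1, heq2, -, -, -, -, hG2, hlt2, hm2⟩ :
              x = p2 ∧ y = q2 ∧ y ≠ s ∧ y ≠ t ∧ (x, y) ∈ G ∧ (y, z) ∈ G ∧ (y, r2) ∈ G ∧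
                z < r2 ∧ ∀ w', (y, w') ∈ G → z < w' → r2 ≤ w' := hev2
          have hr : r1 = r2 := le_antisymm (hm1 r2 hG2 hlt2) (hm2 r1 hG1 hlt1)
          rw [← heq1, ← heq2, hr]
  simpa using hcard

end Stmt12

/-- the transformation (edge subdivision plus binary-tree expansion of
every vertex other than `s` and `t`) preserves the `s`-`t` max-flow, and in the
transformed graph every vertex other than `s` has out-degree at most `2`. -/
theorem stmt_12 {V : Type*} [Fintype V] [LinearOrder V]
    (G : Finset (V × V)) (s t : V) (hst : s ≠ t) :
    maxFlow G s t = maxFlow (transGraph G s t) (Sum.inl s) (Sum.inl t) ∧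
    ∀ w : TW V, w ≠ Sum.inl s → outDeg (transGraph G s t) w ≤ 2 := by
  constructor
  · unfold maxFlow
    congr 1
    ext r
    exact Stmt12.edp_iff G s t hst r
  · exact fun w hw => Stmt12.outdeg_le G s t w hw
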